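/- arXiv:1505.04930 — 2 statements merged into one kernel-verified Lean document; each statement's English description precedes it below -/
import Mathlib

section
/- (One-dimensional strong maximum principle with zeroth-order term) Let u : [0,1] → ℝ be C², suppose u'' + b(x)u' + c(x)u ≥ 0 on (0,1) with b, c continuous and c ≤ 0, and suppose u attains a nonnegative interior maximum: there exists x₀ ∈ (0,1) with u(x₀) = max_{[0,1]} u ≥ 0. Then u is constant on [0,1]. -/
open Set

open Filter Topology in
/-- Second derivative test flavour: at a local max where `f` is differentiable nearby and
`deriv f` is differentiable, the second derivative is nonpositive. -/
lemma smp_aux_deriv_deriv_nonpos {f : ℝ → ℝ} {y : ℝ}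
    (hf : ∀ᶠ x in 𝓝 y, DifferentiableAt ℝ f x)
    (hf' : DifferentiableAt ℝ (deriv f) y)
    (hmax : IsLocalMax f y) : deriv (deriv f) y ≤ 0 := by
  by_contra hK
  push_neg at hK
  have h0 : deriv f y = 0 := hmax.deriv_eq_zero
  have hslope : Tendsto (slope (deriv f) y) (𝓝[≠] y) (𝓝 (deriv (deriv f) y)) :=
    hasDerivAt_iff_tendsto_slope.1 hf'.hasDerivAt
  have hev : ∀ᶠ x in 𝓝[≠] y, 0 < slope (deriv f) y x :=
    hslope.eventually (eventually_gt_nhds hK)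
  rw [eventually_nhdsWithin_iff] at hev
  obtain ⟨δ₁, hδ₁, H₁⟩ := Metric.eventually_nhds_iff.1 hev
  obtain ⟨δ₂, hδ₂, H₂⟩ := Metric.eventually_nhds_iff.1 hf
  obtain ⟨δ₃, hδ₃, H₃⟩ := Metric.eventually_nhds_iff.1 hmax
  set δ : ℝ := min δ₁ (min δ₂ δ₃) / 2 with hδdef
  have hδpos : 0 < δ := by positivity
  have hδ1 : δ < δ₁ := by
    have h1 : min δ₁ (min δ₂ δ₃) ≤ δ₁ := min_le_left _ _
    have := lt_min hδ₂ hδ₃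
    rw [hδdef]; rcases le_or_gt δ₁ (min δ₂ δ₃) with h | h
    · simp only [min_eq_left h]; linarith
    · rw [min_eq_right h.le]; linarith
  have hδ2 : δ < δ₂ := by
    have h1 : min δ₁ (min δ₂ δ₃) ≤ min δ₂ δ₃ := min_le_right _ _
    have h2 : min δ₂ δ₃ ≤ δ₂ := min_le_left _ _
    rw [hδdef]; linarith [lt_min hδ₁ (lt_min hδ₂ hδ₃)]
  have hδ3 : δ < δ₃ := by
    have h1 : min δ₁ (min δ₂ δ₃) ≤ min δ₂ δ₃ := min_le_right _ _
    have h2 : min δ₂ δ₃ ≤ δ₃ := min_le_right _ _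
    rw [hδdef]; linarith [lt_min hδ₁ (lt_min hδ₂ hδ₃)]
  -- `f` is strictly monotone on `[y, y+δ]`
  have hmono : StrictMonoOn f (Icc y (y + δ)) := by
    apply strictMonoOn_of_deriv_pos (convex_Icc _ _)
    · intro x hx
      have hdist : dist x y < δ₂ := by
        rw [Real.dist_eq, abs_lt]
        constructor <;> [linarith [hx.1]; linarith [hx.2]]
      exact (H₂ hdist).continuousAt.continuousWithinAt
    · intro x hx
      rw [interior_Icc] at hx
      have hxy : x ≠ y := ne_of_gt hx.1
      have hdist : dist x y < δ₁ := by
        rw [Real.dist_eq, abs_lt]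
        constructor <;> [linarith [hx.1]; linarith [hx.2]]
      have hs := H₁ hdist hxy
      rw [slope_def_field, h0, sub_zero] at hs
      rcases div_pos_iff.1 hs with ⟨h1, _⟩ | ⟨_, h2⟩
      · exact h1
      · linarith [hx.1]
  have hlt : f y < f (y + δ) :=
    hmono (left_mem_Icc.2 (by linarith)) (right_mem_Icc.2 (by linarith)) (by linarith)
  have hle : f (y + δ) ≤ f y := by
    apply H₃
    rw [Real.dist_eq]
    have : y + δ - y = δ := by ring
    rw [this, abs_of_pos hδpos]
    exact hδ3
  linarith

open Filter Topology in
set_option maxHeartbeats 1600000 in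
/-- Core Hopf-type contradiction: a nonnegative interior max together with a strictly smaller
value on the side `σ` of `x₀` is impossible. -/
lemma smp_hopf_core (u b c : ℝ → ℝ)
    (hc : ContinuousOn u (Icc 0 1))
    (hd : ∀ x ∈ Ioo (0:ℝ) 1, DifferentiableAt ℝ u x)
    (hd' : ∀ x ∈ Ioo (0:ℝ) 1, DifferentiableAt ℝ (deriv u) x)
    (hb : ContinuousOn b (Icc 0 1)) (hcc : ContinuousOn c (Icc 0 1))
    (hc0 : ∀ x ∈ Icc (0:ℝ) 1, c x ≤ 0)
    (hineq : ∀ x ∈ Ioo (0:ℝ) 1,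
      0 ≤ deriv (deriv u) x + b x * deriv u x + c x * u x)
    (x₀ : ℝ) (hx₀ : x₀ ∈ Ioo (0:ℝ) 1)
    (hmax : ∀ x ∈ Icc (0:ℝ) 1, u x ≤ u x₀) (hpos : 0 ≤ u x₀)
    (σ : ℝ) (hσ : σ = 1 ∨ σ = -1)
    (x₁ : ℝ) (hx₁ : x₁ ∈ Ioo (0:ℝ) 1) (hlt : u x₁ < u x₀)
    (hside : 0 < σ * (x₁ - x₀)) : False := by
  have hσ2 : σ * σ = 1 := by rcases hσ with h | h <;> rw [h] <;> norm_num
  have hσne : σ ≠ 0 := by rcases hσ with h | h <;> rw [h] <;> norm_num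
  -- bounds for b and c
  obtain ⟨B, hB⟩ := isCompact_Icc.exists_bound_of_continuousOn hb
  obtain ⟨C, hC⟩ := isCompact_Icc.exists_bound_of_continuousOn hcc
  have hB0 : 0 ≤ B := le_trans (norm_nonneg _) (hB 0 (by norm_num))
  have hC0 : 0 ≤ C := le_trans (norm_nonneg _) (hC 0 (by norm_num))
  set α : ℝ := B + C + 1 with hαdef
  have hα : 0 < α := by positivity
  have hkey : 0 < α * α - B * α - C := by nlinarith
  -- the barrier
  set E : ℝ → ℝ := fun x => Real.exp (σ * α * (x - x₀)) with hEdef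
  have hEpos : ∀ x, 0 < E x := fun x => Real.exp_pos _
  have hE : ∀ x, HasDerivAt E (σ * α * E x) x := by
    intro x
    have h1 : HasDerivAt (fun y : ℝ => σ * α * (y - x₀)) (σ * α) x := by
      simpa using ((hasDerivAt_id x).sub_const x₀).const_mul (σ * α)
    have h2 : HasDerivAt (fun y : ℝ => Real.exp (σ * α * (y - x₀)))
        (Real.exp (σ * α * (x - x₀)) * (σ * α)) x := h1.exp
    have h3 : Real.exp (σ * α * (x - x₀)) * (σ * α) = σ * α * E x := by
      rw [hEdef]; ring
    rw [h3] at h2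
    exact h2
  have hEx₀ : E x₀ = 1 := by simp [hEdef]
  have hEx₁ : 1 < E x₁ := by
    rw [hEdef]
    apply Real.one_lt_exp_iff.2
    nlinarith
  set ε : ℝ := (u x₀ - u x₁) / (2 * (E x₁ - 1)) with hεdef
  have hε : 0 < ε := by
    apply div_pos (by linarith) (by linarith)
  set w : ℝ → ℝ := fun x => u x + ε * (E x - 1) with hwdef
  have hwx₀ : w x₀ = u x₀ := by simp [hwdef, hEx₀]
  have hwx₁ : w x₁ < u x₀ := by
    have hgt : (0:ℝ) < E x₁ - 1 := by linarith
    have h1 : ε * (E x₁ - 1) < u x₀ - u x₁ := by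
      rw [hεdef, div_mul_eq_mul_div, div_lt_iff₀ (by positivity)]
      nlinarith
    simp only [hwdef]; linarith
  clear_value α E ε w
  -- the interval
  obtain ⟨p, q, hpq, hsub, hx₀m, hx₁m, hends, hσx⟩ :
      ∃ p q : ℝ, p < q ∧ Icc p q ⊆ Icc 0 1 ∧ x₀ ∈ Icc p q ∧ x₁ ∈ Icc p q ∧
        (p = x₀ ∧ q = x₁ ∨ p = x₁ ∧ q = x₀) ∧ (∀ x ∈ Icc p q, 0 ≤ σ * (x - x₀)) := by
    rcases hσ with h | h
    · subst h
      have hlt' : x₀ < x₁ := by nlinarith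
      exact ⟨x₀, x₁, hlt', Icc_subset_Icc hx₀.1.le hx₁.2.le,
        left_mem_Icc.2 hlt'.le, right_mem_Icc.2 hlt'.le, Or.inl ⟨rfl, rfl⟩,
        fun x hx => by nlinarith [hx.1]⟩
    · subst h
      have hlt' : x₁ < x₀ := by nlinarith
      exact ⟨x₁, x₀, hlt', Icc_subset_Icc hx₁.1.le hx₀.2.le,
        right_mem_Icc.2 hlt'.le, left_mem_Icc.2 hlt'.le, Or.inr ⟨rfl, rfl⟩,
        fun x hx => by nlinarith [hx.2]⟩
  have hIoo : Ioo p q ⊆ Ioo (0:ℝ) 1 := by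
    intro x hx
    have h1 : (0:ℝ) ≤ p := (hsub (left_mem_Icc.2 hpq.le)).1
    have h2 : q ≤ 1 := (hsub (right_mem_Icc.2 hpq.le)).2
    exact ⟨lt_of_le_of_lt h1 hx.1, lt_of_lt_of_le hx.2 h2⟩
  have hE1 : ∀ x ∈ Icc p q, 1 ≤ E x := by
    intro x hx
    rw [hEdef]
    apply Real.one_le_exp
    have := hσx x hx
    nlinarith
  -- derivative computations for w
  have hw1 : ∀ x ∈ Ioo (0:ℝ) 1, HasDerivAt w (deriv u x + ε * σ * α * E x) x := by
    intro x hx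
    have h1 : HasDerivAt (fun y => ε * (E y - 1)) (ε * (σ * α * E x)) x :=
      ((hE x).sub_const 1).const_mul ε
    have h2 := ((hd x hx).hasDerivAt).add h1
    have h3 : deriv u x + ε * σ * α * E x = deriv u x + ε * (σ * α * E x) := by ring
    rw [h3, hwdef]
    exact h2
  have hderivw : ∀ x ∈ Ioo (0:ℝ) 1, deriv w x = deriv u x + ε * σ * α * E x :=
    fun x hx => (hw1 x hx).deriv
  have hwEq : ∀ x ∈ Ioo (0:ℝ) 1,
      deriv w =ᶠ[𝓝 x] fun y => deriv u y + ε * σ * α * E y := by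
    intro x hx
    filter_upwards [isOpen_Ioo.mem_nhds hx] with y hy
    exact hderivw y hy
  have hw2 : ∀ x ∈ Ioo (0:ℝ) 1,
      HasDerivAt (fun y => deriv u y + ε * σ * α * E y)
        (deriv (deriv u) x + ε * α * α * E x) x := by
    intro x hx
    have h1 : HasDerivAt (fun y => ε * σ * α * E y) ((ε * σ * α) * (σ * α * E x)) x :=
      (hE x).const_mul (ε * σ * α)
    have h2 := ((hd' x hx).hasDerivAt).add h1
    have : ε * σ * α * (σ * α * E x) = ε * (σ * σ) * α * α * E x := by ring
    rw [this, hσ2, mul_one] at h2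
    exact h2
  have hderiv2w : ∀ x ∈ Ioo (0:ℝ) 1,
      deriv (deriv w) x = deriv (deriv u) x + ε * α * α * E x := by
    intro x hx
    rw [(hwEq x hx).deriv_eq]
    exact (hw2 x hx).deriv
  -- strict differential inequality for w on the open interval
  have hstrict : ∀ x ∈ Ioo p q,
      0 < deriv (deriv w) x + b x * deriv w x + c x * w x := by
    intro x hx
    have hx01 : x ∈ Ioo (0:ℝ) 1 := hIoo hx
    have hxIcc : x ∈ Icc (0:ℝ) 1 := Ioo_subset_Icc_self hx01
    have hxpq : x ∈ Icc p q := Ioo_subset_Icc_self hx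
    rw [hderiv2w x hx01, hderivw x hx01]
    have hLu := hineq x hx01
    have hbB : |b x| ≤ B := by simpa [Real.norm_eq_abs] using hB x hxIcc
    have hcC : |c x| ≤ C := by simpa [Real.norm_eq_abs] using hC x hxIcc
    rw [abs_le] at hbB hcC
    have hEx : 1 ≤ E x := hE1 x hxpq
    have hbar : E x * (α * α - B * α - C) ≤
        α * α * E x + σ * α * b x * E x + c x * (E x - 1) := by
      have t2 : 0 ≤ (c x + C) * (E x - 1) := mul_nonneg (by linarith [hcC.1]) (by linarith)
      rcases hσ with h | h <;> subst h
      · have t1 : 0 ≤ α * E x * (b x + B) :=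
          mul_nonneg (mul_nonneg hα.le (hEpos x).le) (by linarith [hbB.1])
        nlinarith [t1, t2, hC0]
      · have t1 : 0 ≤ α * E x * (B - b x) :=
          mul_nonneg (mul_nonneg hα.le (hEpos x).le) (by linarith [hbB.2])
        nlinarith [t1, t2, hC0]
    have hEK : 0 < E x * (α * α - B * α - C) := mul_pos (hEpos x) hkey
    have hexpand : deriv (deriv u) x + ε * α * α * E x +
        b x * (deriv u x + ε * σ * α * E x) + c x * w x =
        (deriv (deriv u) x + b x * deriv u x + c x * u x) +
        ε * (α * α * E x + σ * α * b x * E x + c x * (E x - 1)) := by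
      simp only [hwdef]; ring
    rw [hexpand]
    have h5 : 0 < ε * (E x * (α * α - B * α - C)) := mul_pos hε hEK
    have h6 := mul_le_mul_of_nonneg_left hbar hε.le
    linarith
  -- continuity of w and existence of a maximum on [p,q]
  have hEc : Continuous E := by
    rw [hEdef]
    exact Real.continuous_exp.comp (continuous_const.mul (continuous_id.sub continuous_const))
  have hwcont : ContinuousOn w (Icc p q) := by
    rw [hwdef]
    exact (hc.mono hsub).add ((continuous_const.mul (hEc.sub continuous_const)).continuousOn)
  obtain ⟨y, hy, hymax⟩ := isCompact_Icc.exists_isMaxOn (nonempty_Icc.2 hpq.le) hwcont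
  have hymax' : ∀ x ∈ Icc p q, w x ≤ w y := hymax
  -- the max value is at least w x₀ = u x₀ ≥ 0
  have hwy0 : 0 ≤ w y := by
    have := hymax' x₀ hx₀m
    rw [hwx₀] at this
    linarith
  -- case: y interior
  have hynotin : y ∉ Ioo p q := by
    intro hyIoo
    have hy01 : y ∈ Ioo (0:ℝ) 1 := hIoo hyIoo
    have hlocal : IsLocalMax w y := hymax.isLocalMax (Icc_mem_nhds hyIoo.1 hyIoo.2)
    have hd1 : deriv w y = 0 := hlocal.deriv_eq_zero
    have hdiffev : ∀ᶠ x in 𝓝 y, DifferentiableAt ℝ w x := by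
      filter_upwards [isOpen_Ioo.mem_nhds hy01] with z hz
      exact (hw1 z hz).differentiableAt
    have hdiff' : DifferentiableAt ℝ (deriv w) y := by
      rw [Filter.EventuallyEq.differentiableAt_iff (hwEq y hy01)]
      exact ((hd' y hy01).add (((hE y).const_mul (ε * σ * α)).differentiableAt))
    have hd2 : deriv (deriv w) y ≤ 0 := smp_aux_deriv_deriv_nonpos hdiffev hdiff' hlocal
    have hcw : c y * w y ≤ 0 :=
      mul_nonpos_of_nonpos_of_nonneg (hc0 y (Ioo_subset_Icc_self hy01)) hwy0
    have := hstrict y hyIoo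
    rw [hd1, mul_zero] at this
    linarith
  -- so y is an endpoint, hence y = x₀ (the other endpoint x₁ has too small a value)
  have hyx₀ : y = x₀ := by
    have hyends : y = p ∨ y = q := by
      rcases hy.1.lt_or_eq with h1 | h1
      · rcases hy.2.lt_or_eq with h2 | h2
        · exact absurd ⟨h1, h2⟩ hynotin
        · exact Or.inr h2
      · exact Or.inl h1.symm
    have hy' : y = x₀ ∨ y = x₁ := by
      rcases hends with ⟨h1, h2⟩ | ⟨h1, h2⟩ <;> rcases hyends with h | h <;>
        simp [h, h1, h2] <;> tauto
    rcases hy' with h | h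
    · exact h
    · exfalso
      have := hymax' x₀ hx₀m
      rw [hwx₀, h] at this
      linarith
  rw [hyx₀] at hymax'
  clear hyx₀ hy hwy0 hynotin hymax
  -- derivative of w at x₀ is ε σ α, but one-sided slopes force σ * (that) ≤ 0
  have hu'0 : deriv u x₀ = 0 := by
    have : IsMaxOn u (Icc 0 1) x₀ := hmax
    exact (this.isLocalMax (Icc_mem_nhds hx₀.1 hx₀.2)).deriv_eq_zero
  have hw'₀ : HasDerivAt w (ε * σ * α) x₀ := by
    have := hw1 x₀ hx₀
    rw [hu'0, hEx₀] at this
    simpa using this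
  have hslope : Tendsto (slope w x₀) (𝓝[≠] x₀) (𝓝 (ε * σ * α)) :=
    hasDerivAt_iff_tendsto_slope.1 hw'₀
  have hIoosub : Ioo p q ⊆ {x | x ≠ x₀} := by
    intro x hx
    rcases hends with ⟨h1, _⟩ | ⟨_, h2⟩
    · exact ne_of_gt (h1 ▸ hx.1)
    · exact ne_of_lt (h2 ▸ hx.2)
  have hT : Tendsto (slope w x₀) (𝓝[Ioo p q] x₀) (𝓝 (ε * σ * α)) :=
    hslope.mono_left (nhdsWithin_mono _ hIoosub)
  have hTσ : Tendsto (fun x => σ * slope w x₀ x) (𝓝[Ioo p q] x₀) (𝓝 (ε * α)) := by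
    have := hT.const_mul σ
    have h2 : σ * (ε * σ * α) = ε * α := by
      have : σ * (ε * σ * α) = ε * (σ * σ) * α := by ring
      rw [this, hσ2]; ring
    rwa [h2] at this
  have hNeBot : (𝓝[Ioo p q] x₀).NeBot := by
    rw [← mem_closure_iff_nhdsWithin_neBot, closure_Ioo hpq.ne]
    exact hx₀m
  have hevslope : ∀ᶠ x in 𝓝[Ioo p q] x₀, σ * slope w x₀ x ≤ 0 := by
    apply eventually_nhdsWithin_of_forall
    intro x hx
    have hwle : w x ≤ w x₀ := hymax' x (Ioo_subset_Icc_self hx)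
    have hxne : x ≠ x₀ := hIoosub hx
    have hσpos : 0 < σ * (x - x₀) := by
      rcases (hσx x (Ioo_subset_Icc_self hx)).lt_or_eq with h | h
      · exact h
      · exfalso
        apply hxne
        have : x - x₀ = 0 := by
          by_contra hne
          exact hne (by
            have := mul_eq_zero.1 h.symm
            tauto)
        linarith [this]
    rw [slope_def_field]
    have key : σ * ((w x - w x₀) / (x - x₀)) =
        ((w x - w x₀) * (σ * (x - x₀))) / ((x - x₀) * (x - x₀)) := by
      have hne : x - x₀ ≠ 0 := sub_ne_zero.2 hxne
      field_simp
    rw [key]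
    apply div_nonpos_iff.2
    exact Or.inr ⟨mul_nonpos_of_nonpos_of_nonneg (sub_nonpos.2 hwle) hσpos.le, mul_self_nonneg _⟩
  have : ε * α ≤ 0 := le_of_tendsto hTσ hevslope
  nlinarith

/-- 1D strong maximum principle: if `u'' + b u' + c u ≥ 0` with `c ≤ 0` and `u` attains a
nonnegative interior maximum, then `u` is constant on `[0,1]`. -/
theorem strong_max_principle_1d (u b c : ℝ → ℝ)
    (hc : ContinuousOn u (Icc 0 1))
    (hd : ∀ x ∈ Ioo (0:ℝ) 1, DifferentiableAt ℝ u x)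
    (hd' : ∀ x ∈ Ioo (0:ℝ) 1, DifferentiableAt ℝ (deriv u) x)
    (hb : ContinuousOn b (Icc 0 1)) (hcc : ContinuousOn c (Icc 0 1))
    (hc0 : ∀ x ∈ Icc (0:ℝ) 1, c x ≤ 0)
    (hineq : ∀ x ∈ Ioo (0:ℝ) 1,
      0 ≤ deriv (deriv u) x + b x * deriv u x + c x * u x)
    (x₀ : ℝ) (hx₀ : x₀ ∈ Ioo (0:ℝ) 1)
    (hmax : ∀ x ∈ Icc (0:ℝ) 1, u x ≤ u x₀) (hpos : 0 ≤ u x₀) :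
    ∀ x ∈ Icc (0:ℝ) 1, u x = u x₀ := by
  have hint : ∀ z ∈ Ioo (0:ℝ) 1, u z = u x₀ := by
    intro z hz
    refine le_antisymm (hmax z (Ioo_subset_Icc_self hz)) ?_
    by_contra h
    push_neg at h
    rcases lt_trichotomy z x₀ with hlt | heq | hgt
    · exact smp_hopf_core u b c hc hd hd' hb hcc hc0 hineq x₀ hx₀ hmax hpos
        (-1) (Or.inr rfl) z hz h (by nlinarith)
    · subst heq; exact absurd rfl (ne_of_lt h)
    · exact smp_hopf_core u b c hc hd hd' hb hcc hc0 hineq x₀ hx₀ hmax hpos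
        1 (Or.inl rfl) z hz h (by nlinarith)
  have hbd : ∀ e : ℝ, e ∈ Icc (0:ℝ) 1 → e ∈ closure (Ioo (0:ℝ) 1) → u e = u x₀ := by
    intro e he hecl
    haveI : (nhdsWithin e (Ioo (0:ℝ) 1)).NeBot :=
      mem_closure_iff_nhdsWithin_neBot.1 hecl
    have h1 : Filter.Tendsto u (nhdsWithin e (Ioo (0:ℝ) 1)) (nhds (u e)) :=
      (hc e he).mono Ioo_subset_Icc_self
    have h2 : Filter.Tendsto u (nhdsWithin e (Ioo (0:ℝ) 1)) (nhds (u x₀)) := by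
      apply Filter.Tendsto.congr' _ tendsto_const_nhds
      exact eventually_nhdsWithin_of_forall fun x hx => (hint x hx).symm
    exact tendsto_nhds_unique h1 h2
  intro x hx
  rcases hx.1.lt_or_eq with h0 | h0
  · rcases hx.2.lt_or_eq with h1 | h1
    · exact hint x ⟨h0, h1⟩
    · subst h1
      exact hbd 1 hx (by rw [closure_Ioo (by norm_num : (0:ℝ) ≠ 1)]; exact hx)
  · rw [← h0] at hx ⊢
    exact hbd _ hx (by rw [closure_Ioo (by norm_num : (0:ℝ) ≠ 1)]; exact hx)
end

section
/- (One-dimensional Hopf lemma) Let u : [0,1] → ℝ be C² with u'' + b(x)u' ≥ 0 on (0,1) for continuous bounded b, and suppose u(x) < u(1) for all x ∈ [0,1). Then the derivative at the boundary maximum is strictly positive: u'(1) > 0. -/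
open Set

/-- 1D Hopf lemma: if `u ∈ C²([0,1])` satisfies `u'' + b u' ≥ 0` on `(0,1)` and
`u(x) < u(1)` for all `x ∈ [0,1)`, then `u'(1) > 0`. -/
theorem hopf_lemma_1d (u b : ℝ → ℝ)
    (hu : ContDiffOn ℝ 2 u (Icc 0 1))
    (hb : ContinuousOn b (Icc 0 1))
    (hineq : ∀ x ∈ Ioo (0:ℝ) 1,
      0 ≤ derivWithin (derivWithin u (Icc 0 1)) (Icc 0 1) x +
        b x * derivWithin u (Icc 0 1) x)
    (hmax : ∀ x ∈ Ico (0:ℝ) 1, u x < u 1) :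
    0 < derivWithin u (Icc 0 1) 1 := by
  by_contra h
  push_neg at h
  set u' := derivWithin u (Icc 0 1) with hu'def
  set u'' := derivWithin u' (Icc 0 1) with hu''def
  have hud : UniqueDiffOn ℝ (Icc (0:ℝ) 1) := uniqueDiffOn_Icc zero_lt_one
  have hu1 : ContDiffOn ℝ 1 u' (Icc 0 1) := hu.derivWithin hud (by norm_num)
  have hu'cont : ContinuousOn u' (Icc 0 1) := hu1.continuousOn
  have hu'diff : DifferentiableOn ℝ u' (Icc 0 1) :=
    hu1.differentiableOn one_ne_zero
  -- primitive of b
  set B : ℝ → ℝ := fun x => ∫ t in (0:ℝ)..x, b t with hBdef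
  have hbint : ∀ x ∈ Icc (0:ℝ) 1, IntervalIntegrable b MeasureTheory.volume 0 x := by
    intro x hx
    apply ContinuousOn.intervalIntegrable
    apply hb.mono
    rw [uIcc_of_le hx.1]
    exact Icc_subset_Icc le_rfl hx.2
  have hBcont : ContinuousOn B (Icc 0 1) := by
    have := intervalIntegral.continuousOn_primitive_interval
      (f := b) (a := (0:ℝ)) (b := (1:ℝ)) (μ := MeasureTheory.volume) ?_
    · simpa [uIcc_of_le (zero_le_one' ℝ), hBdef] using this
    · rw [uIcc_of_le (zero_le_one' ℝ)]
      exact (hb.mono le_rfl).integrableOn_compact isCompact_Icc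
  have hBderiv : ∀ x ∈ Ioo (0:ℝ) 1, HasDerivAt B (b x) x := by
    intro x hx
    have hxI : x ∈ Icc (0:ℝ) 1 := Ioo_subset_Icc_self hx
    have hcb : ContinuousAt b x :=
      hb.continuousAt (Icc_mem_nhds hx.1 hx.2)
    exact intervalIntegral.integral_hasDerivAt_right (hbint x hxI)
      (ContinuousOn.stronglyMeasurableAtFilter isOpen_Ioo
        (hb.mono Ioo_subset_Icc_self) x hx) hcb
  -- g = exp(B) * u'
  set g : ℝ → ℝ := fun x => Real.exp (B x) * u' x with hgdef
  have hgcont : ContinuousOn g (Icc 0 1) :=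
    (Real.continuous_exp.comp_continuousOn hBcont).mul hu'cont
  have hgderiv : ∀ x ∈ Ioo (0:ℝ) 1,
      HasDerivWithinAt g (Real.exp (B x) * (u'' x + b x * u' x)) (Ioo 0 1) x := by
    intro x hx
    have hxI : x ∈ Icc (0:ℝ) 1 := Ioo_subset_Icc_self hx
    have h1 : HasDerivWithinAt (fun y => Real.exp (B y)) (Real.exp (B x) * b x) (Ioo 0 1) x :=
      (((hBderiv x hx).hasDerivWithinAt (s := Ioo 0 1)).exp)
    have h2 : HasDerivWithinAt u' (u'' x) (Ioo 0 1) x :=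
      ((hu'diff x hxI).hasDerivWithinAt.mono Ioo_subset_Icc_self)
    have : HasDerivWithinAt g (Real.exp (B x) * b x * u' x + Real.exp (B x) * u'' x) (Ioo 0 1) x :=
      h1.mul h2
    convert this using 1
    ring
  have hgmono : MonotoneOn g (Icc 0 1) := by
    apply monotoneOn_of_hasDerivWithinAt_nonneg (convex_Icc 0 1) hgcont
    · intro x hx
      rw [interior_Icc] at hx ⊢
      exact hgderiv x hx
    · intro x hx
      rw [interior_Icc] at hx
      exact mul_nonneg (Real.exp_pos _).le (hineq x hx)
  -- g ≤ 0 on [0,1], hence u' ≤ 0 on [0,1].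
  have hg1 : g 1 ≤ 0 := mul_nonpos_of_nonneg_of_nonpos (Real.exp_pos _).le h
  have hu'np : ∀ x ∈ Icc (0:ℝ) 1, u' x ≤ 0 := by
    intro x hx
    have : g x ≤ g 1 := hgmono hx (by norm_num) hx.2
    have hgx : g x ≤ 0 := this.trans hg1
    by_contra hpos
    push_neg at hpos
    have : 0 < g x := mul_pos (Real.exp_pos _) hpos
    linarith
  -- so u is antitone on [0,1]
  have huanti : AntitoneOn u (Icc 0 1) := by
    apply antitoneOn_of_hasDerivWithinAt_nonpos (convex_Icc 0 1) (hu.continuousOn) (f' := u')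
    · intro x hx
      rw [interior_Icc] at hx ⊢
      exact ((hu.differentiableOn (by norm_num) x
        (Ioo_subset_Icc_self hx)).hasDerivWithinAt.mono Ioo_subset_Icc_self)
    · intro x hx
      rw [interior_Icc] at hx
      exact hu'np x (Ioo_subset_Icc_self hx)
  have := huanti (by norm_num : (0:ℝ) ∈ Icc (0:ℝ) 1) (by norm_num : (1:ℝ) ∈ Icc (0:ℝ) 1)
    zero_le_one
  have h0 := hmax 0 (by norm_num)
  linarith
end
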